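/- Let G be a snake graph, P a perfect matching of G, and i_1, …, i_r (r ≥ 1) a sequence of tile indices such that, setting Q_0 = P and Q_t = μ_{i_t} Q_{t−1}, each Q_{t−1} can twist on G_{i_t}, and Q_r = P. Then there exist indices 1 ≤ t < t' ≤ r such that i_t = i_{t'}, the indices i_s for t < s < t' are pairwise distinct and all different from i_t, and moreover |i_s − i_t| > 1 for every s with t < s < t'. -/

import Mathlib

/-- An edge of the integer lattice: `(p, true)` is the horizontal unit segment
from `p` to `p + (1, 0)`, and `(p, false)` is the vertical unit segment from
`p` to `p + (0, 1)`. -/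
abbrev LatticeEdge : Type := (ℤ × ℤ) × Bool

/-- A lattice edge is horizontal if it is parallel to the x-axis. -/
def IsHorizontalEdge (e : LatticeEdge) : Prop := e.2 = true

/-- A lattice edge is vertical if it is parallel to the y-axis. -/
def IsVerticalEdge (e : LatticeEdge) : Prop := e.2 = false

/-- The two endpoints of a lattice edge. -/
def endpointsOf (e : LatticeEdge) : Set (ℤ × ℤ) :=
  if e.2 then {e.1, (e.1.1 + 1, e.1.2)} else {e.1, (e.1.1, e.1.2 + 1)}

/-- The south side of the unit tile with lower-left corner `c`. -/
def southSide (c : ℤ × ℤ) : LatticeEdge := (c, true)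

/-- The north side of the unit tile with lower-left corner `c`. -/
def northSide (c : ℤ × ℤ) : LatticeEdge := ((c.1, c.2 + 1), true)

/-- The west side of the unit tile with lower-left corner `c`. -/
def westSide (c : ℤ × ℤ) : LatticeEdge := (c, false)

/-- The east side of the unit tile with lower-left corner `c`. -/
def eastSide (c : ℤ × ℤ) : LatticeEdge := ((c.1 + 1, c.2), false)

/-- The four sides of the unit tile with lower-left corner `c`. -/
def tileSides (c : ℤ × ℤ) : Set LatticeEdge :=
  {southSide c, northSide c, westSide c, eastSide c}

/-- The four corners of the unit tile with lower-left corner `c`. -/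
def tileCorners (c : ℤ × ℤ) : Set (ℤ × ℤ) :=
  {c, (c.1 + 1, c.2), (c.1, c.2 + 1), (c.1 + 1, c.2 + 1)}

/-- A snake graph with `d ≥ 1` tiles: tile `1` has lower-left corner `(0, 0)`,
and each subsequent tile is the translate of the previous one by one unit to
the right or one unit up.  Tiles are indexed `1, …, d`; `corner i` is the
lower-left corner of tile `i`. -/
structure SnakeGraph where
  d : ℕ
  one_le_d : 1 ≤ d
  corner : ℕ → ℤ × ℤ
  corner_one : corner 1 = (0, 0)
  corner_succ : ∀ i, 1 ≤ i → i < d →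
    corner (i + 1) = ((corner i).1 + 1, (corner i).2) ∨
      corner (i + 1) = ((corner i).1, (corner i).2 + 1)

namespace SnakeGraph

/-- The set of sides of tile `i` of `G`. -/
def tile (G : SnakeGraph) (i : ℕ) : Set LatticeEdge := tileSides (G.corner i)

/-- The edge set of (the graph of) `G`: all sides of all tiles. -/
def edges (G : SnakeGraph) : Set LatticeEdge := ⋃ i ∈ Set.Icc 1 G.d, G.tile i

/-- The vertex set of `G`: all corners of all tiles. -/
def vertices (G : SnakeGraph) : Set (ℤ × ℤ) :=
  ⋃ i ∈ Set.Icc 1 G.d, tileCorners (G.corner i)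

/-- A perfect matching of `G`: a set of edges of `G` such that every vertex of
`G` is incident to exactly one edge of the set. -/
def IsPerfectMatching (G : SnakeGraph) (P : Set LatticeEdge) : Prop :=
  P ⊆ G.edges ∧ ∀ v ∈ G.vertices, ∃! e, e ∈ P ∧ v ∈ endpointsOf e

/-- `P` can twist on tile `i` if two of the four sides of tile `i` belong to `P`. -/
def CanTwist (G : SnakeGraph) (P : Set LatticeEdge) (i : ℕ) : Prop :=
  1 ≤ i ∧ i ≤ G.d ∧ (P ∩ G.tile i).ncard = 2

/-- The twist of `P` on tile `i`: replace the sides of tile `i` belonging to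
`P` by the other sides of tile `i`. -/
def twist (G : SnakeGraph) (i : ℕ) (P : Set LatticeEdge) : Set LatticeEdge :=
  (P \ G.tile i) ∪ (G.tile i \ P)

/-- A boundary edge of `G`: an edge which is a side of exactly one tile. -/
def IsBoundaryEdge (G : SnakeGraph) (e : LatticeEdge) : Prop :=
  ∃! i, (1 ≤ i ∧ i ≤ G.d) ∧ e ∈ G.tile i

/-- `P` is the minimal matching `P₋` of `G`: the perfect matching consisting
only of boundary edges which contains no vertical side of tile `1`. -/
def IsMinimalMatching (G : SnakeGraph) (P : Set LatticeEdge) : Prop :=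
  G.IsPerfectMatching P ∧ (∀ e ∈ P, G.IsBoundaryEdge e) ∧
    ∀ e ∈ P ∩ G.tile 1, IsHorizontalEdge e

/-- `P` is the maximal matching `P₊` of `G`: the perfect matching consisting
only of boundary edges other than the minimal one, i.e. the one containing a
vertical side of tile `1`. -/
def IsMaximalMatching (G : SnakeGraph) (P : Set LatticeEdge) : Prop :=
  G.IsPerfectMatching P ∧ (∀ e ∈ P, G.IsBoundaryEdge e) ∧
    ∃ e ∈ P ∩ G.tile 1, IsVerticalEdge e

/-- `G` is a straight snake graph: every tile is the translate of the previous
one by one unit to the right. -/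
def IsStraight (G : SnakeGraph) : Prop :=
  ∀ i, 1 ≤ i → i < G.d → G.corner (i + 1) = ((G.corner i).1 + 1, (G.corner i).2)

end SnakeGraph

open SnakeGraph
open scoped Classical

/-! ### Basic facts about tile sides -/

lemma side_ne_SN (c : ℤ × ℤ) : southSide c ≠ northSide c := by
  simp only [southSide, northSide, ne_eq, Prod.ext_iff]; intro h; omega
lemma side_ne_SW (c : ℤ × ℤ) : southSide c ≠ westSide c := by
  simp [southSide, westSide, Prod.ext_iff]
lemma side_ne_SE (c : ℤ × ℤ) : southSide c ≠ eastSide c := by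
  simp [southSide, eastSide, Prod.ext_iff]
lemma side_ne_NW (c : ℤ × ℤ) : northSide c ≠ westSide c := by
  simp [northSide, westSide, Prod.ext_iff]
lemma side_ne_NE (c : ℤ × ℤ) : northSide c ≠ eastSide c := by
  simp [northSide, eastSide, Prod.ext_iff]
lemma side_ne_WE (c : ℤ × ℤ) : westSide c ≠ eastSide c := by
  simp only [westSide, eastSide, ne_eq, Prod.ext_iff]; intro h; omega

lemma mem_tileSides {e : LatticeEdge} {c : ℤ × ℤ} :
    e ∈ tileSides c ↔ e = southSide c ∨ e = northSide c ∨ e = westSide c ∨ e = eastSide c := by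
  simp [tileSides]

/-- ncard of the intersection with a tile, as a sum of indicators. -/
lemma ncard_inter_tileSides (Q : Set LatticeEdge) (c : ℤ × ℤ) :
    (Q ∩ tileSides c).ncard =
      (if southSide c ∈ Q then 1 else 0) + (if northSide c ∈ Q then 1 else 0) +
      (if westSide c ∈ Q then 1 else 0) + (if eastSide c ∈ Q then 1 else 0) := by
  have h : Q ∩ tileSides c =
      ↑(({southSide c, northSide c, westSide c, eastSide c} : Finset LatticeEdge).filter
        (· ∈ Q)) := by
    ext x
    simp [tileSides, Finset.mem_filter, and_comm, or_assoc]
  rw [h, Set.ncard_coe_finset]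
  rw [Finset.filter_insert, Finset.filter_insert, Finset.filter_insert,
    Finset.filter_singleton]
  have hSN := side_ne_SN c; have hSW := side_ne_SW c; have hSE := side_ne_SE c
  have hNW := side_ne_NW c; have hNE := side_ne_NE c; have hWE := side_ne_WE c
  by_cases h1 : southSide c ∈ Q <;> by_cases h2 : northSide c ∈ Q <;>
    by_cases h3 : westSide c ∈ Q <;> by_cases h4 : eastSide c ∈ Q <;>
    simp [h1, h2, h3, h4, Finset.card_insert_of_notMem, hSN, hSW, hSE, hNW, hNE, hWE]

/-! ### Endpoints -/

lemma endpoints_south (c : ℤ × ℤ) : endpointsOf (southSide c) = {c, (c.1 + 1, c.2)} := by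
  simp [endpointsOf, southSide]
lemma endpoints_north (c : ℤ × ℤ) :
    endpointsOf (northSide c) = {(c.1, c.2 + 1), (c.1 + 1, c.2 + 1)} := by
  simp [endpointsOf, northSide]
lemma endpoints_west (c : ℤ × ℤ) : endpointsOf (westSide c) = {c, (c.1, c.2 + 1)} := by
  simp [endpointsOf, westSide]
lemma endpoints_east (c : ℤ × ℤ) :
    endpointsOf (eastSide c) = {(c.1 + 1, c.2), (c.1 + 1, c.2 + 1)} := by
  simp [endpointsOf, eastSide]

lemma endpoints_subset_corners {e : LatticeEdge} {c : ℤ × ℤ} (he : e ∈ tileSides c) :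
    endpointsOf e ⊆ tileCorners c := by
  rcases mem_tileSides.1 he with h | h | h | h <;> subst h <;>
    simp only [endpoints_south, endpoints_north, endpoints_west, endpoints_east,
      tileCorners] <;> intro v hv <;> simp at hv ⊢ <;> tauto

/-! ### Corner arithmetic -/

lemma corner_shift (G : SnakeGraph) {a : ℕ} (ha : 1 ≤ a) (k : ℕ) (h : a + k ≤ G.d) :
    (G.corner a).1 ≤ (G.corner (a + k)).1 ∧ (G.corner a).2 ≤ (G.corner (a + k)).2 ∧
      (G.corner (a + k)).1 + (G.corner (a + k)).2 =
        (G.corner a).1 + (G.corner a).2 + k := by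
  induction k with
  | zero => simp
  | succ k ih =>
    have hk : a + k ≤ G.d := by omega
    obtain ⟨h1, h2, h3⟩ := ih hk
    have := G.corner_succ (a + k) (by omega) (by omega)
    rcases this with h4 | h4 <;>
      · rw [show a + (k+1) = (a+k)+1 from rfl, h4]
        simp only [Prod.fst, Prod.snd]
        refine ⟨by omega, by omega, by omega⟩

lemma corner_sum (G : SnakeGraph) {a : ℕ} (ha : 1 ≤ a) (had : a ≤ G.d) :
    (G.corner a).1 + (G.corner a).2 = (a : ℤ) - 1 := by
  have := corner_shift G (le_refl 1) (a - 1) (by omega)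
  rw [show 1 + (a - 1) = a by omega] at this
  rw [this.2.2, G.corner_one]
  norm_num [Nat.cast_sub ha]

lemma corner_inj (G : SnakeGraph) {a b : ℕ} (ha : 1 ≤ a) (had : a ≤ G.d)
    (hb : 1 ≤ b) (hbd : b ≤ G.d) (h : G.corner a = G.corner b) : a = b := by
  have h1 := corner_sum G ha had
  have h2 := corner_sum G hb hbd
  rw [h] at h1; omega

/-- Tiles at distance ≥ 2 are disjoint. -/
lemma tile_disjoint (G : SnakeGraph) {a b : ℕ} (ha : 1 ≤ a) (hab : a + 1 < b)
    (hbd : b ≤ G.d) {e : LatticeEdge} (hea : e ∈ G.tile a) (heb : e ∈ G.tile b) : False := by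
  obtain ⟨h1, h2, h3⟩ := corner_shift G ha (b - a) (by omega)
  rw [show a + (b - a) = b by omega] at h1 h2 h3
  have hk : (2 : ℤ) ≤ (b : ℤ) - a := by push_cast; omega
  rcases mem_tileSides.1 hea with h | h | h | h <;>
    rcases mem_tileSides.1 heb with h' | h' | h' | h' <;>
    · rw [h'] at h
      simp only [southSide, northSide, westSide, eastSide, Prod.ext_iff] at h
      omega

/-- Intersection of consecutive tiles is the shared edge. -/
lemma tile_inter_succ (G : SnakeGraph) {a : ℕ} (ha : 1 ≤ a) (hbd : a + 1 ≤ G.d) :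
    G.tile a ∩ G.tile (a + 1) = {eastSide (G.corner a)} ∨
      G.tile a ∩ G.tile (a + 1) = {northSide (G.corner a)} := by
  rcases G.corner_succ a ha (by omega) with h | h
  · left
    ext e
    simp only [SnakeGraph.tile, Set.mem_inter_iff, mem_tileSides, h, Set.mem_singleton_iff]
    constructor
    · rintro ⟨h1 | h1 | h1 | h1, h2 | h2 | h2 | h2⟩ <;>
        subst h1 <;>
        first
        | rfl
        | (simp only [southSide, northSide, westSide, eastSide, Prod.ext_iff] at h2 ⊢ <;> omega)
    · rintro rfl
      constructor <;> simp [southSide, northSide, westSide, eastSide, Prod.ext_iff]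
  · right
    ext e
    simp only [SnakeGraph.tile, Set.mem_inter_iff, mem_tileSides, h, Set.mem_singleton_iff]
    constructor
    · rintro ⟨h1 | h1 | h1 | h1, h2 | h2 | h2 | h2⟩ <;>
        subst h1 <;>
        first
        | rfl
        | (simp only [southSide, northSide, westSide, eastSide, Prod.ext_iff] at h2 ⊢ <;> omega)
    · rintro rfl
      constructor <;> simp [southSide, northSide, westSide, eastSide, Prod.ext_iff]

/-! ### Matching lemmas -/

lemma tile_subset_edges (G : SnakeGraph) {i : ℕ} (hi1 : 1 ≤ i) (hid : i ≤ G.d) :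
    G.tile i ⊆ G.edges := fun e he =>
  Set.mem_biUnion (Set.mem_Icc.2 ⟨hi1, hid⟩) he

lemma corners_subset_vertices (G : SnakeGraph) {i : ℕ} (hi1 : 1 ≤ i) (hid : i ≤ G.d) :
    tileCorners (G.corner i) ⊆ G.vertices := fun v hv =>
  Set.mem_biUnion (Set.mem_Icc.2 ⟨hi1, hid⟩) hv

lemma pm_unique_at {G : SnakeGraph} {Q : Set LatticeEdge} (hQ : G.IsPerfectMatching Q)
    {v : ℤ × ℤ} (hv : v ∈ G.vertices) {e1 e2 : LatticeEdge}
    (h1 : e1 ∈ Q) (h2 : e2 ∈ Q) (hv1 : v ∈ endpointsOf e1) (hv2 : v ∈ endpointsOf e2) :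
    e1 = e2 := by
  obtain ⟨e, -, hu⟩ := hQ.2 v hv
  rw [hu e1 ⟨h1, hv1⟩, hu e2 ⟨h2, hv2⟩]

section adjacency
variable {G : SnakeGraph} {Q : Set LatticeEdge} {i : ℕ}

lemma pm_not_SW (hQ : G.IsPerfectMatching Q) (hi1 : 1 ≤ i) (hid : i ≤ G.d) :
    ¬(southSide (G.corner i) ∈ Q ∧ westSide (G.corner i) ∈ Q) := by
  rintro ⟨h1, h2⟩
  have hv : G.corner i ∈ G.vertices :=
    corners_subset_vertices G hi1 hid (by simp [tileCorners])
  exact side_ne_SW _ (pm_unique_at hQ hv h1 h2 (by simp [endpoints_south])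
    (by simp [endpoints_west]))

lemma pm_not_SE (hQ : G.IsPerfectMatching Q) (hi1 : 1 ≤ i) (hid : i ≤ G.d) :
    ¬(southSide (G.corner i) ∈ Q ∧ eastSide (G.corner i) ∈ Q) := by
  rintro ⟨h1, h2⟩
  have hv : ((G.corner i).1 + 1, (G.corner i).2) ∈ G.vertices :=
    corners_subset_vertices G hi1 hid (by simp [tileCorners])
  exact side_ne_SE _ (pm_unique_at hQ hv h1 h2 (by simp [endpoints_south])
    (by simp [endpoints_east]))

lemma pm_not_NW (hQ : G.IsPerfectMatching Q) (hi1 : 1 ≤ i) (hid : i ≤ G.d) :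
    ¬(northSide (G.corner i) ∈ Q ∧ westSide (G.corner i) ∈ Q) := by
  rintro ⟨h1, h2⟩
  have hv : ((G.corner i).1, (G.corner i).2 + 1) ∈ G.vertices :=
    corners_subset_vertices G hi1 hid (by simp [tileCorners])
  exact side_ne_NW _ (pm_unique_at hQ hv h1 h2 (by simp [endpoints_north])
    (by simp [endpoints_west]))

lemma pm_not_NE (hQ : G.IsPerfectMatching Q) (hi1 : 1 ≤ i) (hid : i ≤ G.d) :
    ¬(northSide (G.corner i) ∈ Q ∧ eastSide (G.corner i) ∈ Q) := by
  rintro ⟨h1, h2⟩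
  have hv : ((G.corner i).1 + 1, (G.corner i).2 + 1) ∈ G.vertices :=
    corners_subset_vertices G hi1 hid (by simp [tileCorners])
  exact side_ne_NE _ (pm_unique_at hQ hv h1 h2 (by simp [endpoints_north])
    (by simp [endpoints_east]))

/-- If a perfect matching has two edges in a tile, they are an opposite pair. -/
lemma pm_twist_pattern (hQ : G.IsPerfectMatching Q) (hi1 : 1 ≤ i) (hid : i ≤ G.d)
    (h2 : (Q ∩ G.tile i).ncard = 2) :
    (southSide (G.corner i) ∈ Q ∧ northSide (G.corner i) ∈ Q ∧
      westSide (G.corner i) ∉ Q ∧ eastSide (G.corner i) ∉ Q) ∨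
    (southSide (G.corner i) ∉ Q ∧ northSide (G.corner i) ∉ Q ∧
      westSide (G.corner i) ∈ Q ∧ eastSide (G.corner i) ∈ Q) := by
  have hc := ncard_inter_tileSides Q (G.corner i)
  rw [show G.tile i = tileSides (G.corner i) from rfl] at h2
  rw [h2] at hc
  have hSW := pm_not_SW hQ hi1 hid
  have hSE := pm_not_SE hQ hi1 hid
  have hNW := pm_not_NW hQ hi1 hid
  have hNE := pm_not_NE hQ hi1 hid
  by_cases hS : southSide (G.corner i) ∈ Q <;>
    by_cases hN : northSide (G.corner i) ∈ Q <;>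
    by_cases hW : westSide (G.corner i) ∈ Q <;>
    by_cases hE : eastSide (G.corner i) ∈ Q <;>
    simp only [hS, hN, hW, hE, if_true, if_false, if_pos, if_neg, not_false_iff] at hc <;>
    norm_num at hc <;>
    tauto
end adjacency

/-- Helper for the corner case of `twist_pm`. -/
lemma twist_unique_at {G : SnakeGraph} {Q : Set LatticeEdge} (hQ : G.IsPerfectMatching Q)
    {i : ℕ} {v : ℤ × ℤ} (hv : v ∈ G.vertices) {o w : LatticeEdge}
    (hoQ : o ∈ Q) (hot : o ∈ G.tile i) (hvo : v ∈ endpointsOf o)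
    (hwt : w ∈ G.tile i) (hwQ : w ∉ Q) (hvw : v ∈ endpointsOf w)
    (huniq : ∀ e, e ∈ G.tile i → e ∉ Q → v ∈ endpointsOf e → e = w) :
    ∃! e, e ∈ G.twist i Q ∧ v ∈ endpointsOf e := by
  refine ⟨w, ⟨Or.inr ⟨hwt, hwQ⟩, hvw⟩, ?_⟩
  rintro e' ⟨he' | he', hve'⟩
  · exact absurd ((pm_unique_at hQ hv he'.1 hoQ hve' hvo) ▸ hot) he'.2
  · exact huniq e' he'.1 he'.2 hve'

/-- The twist of a perfect matching is a perfect matching. -/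
lemma twist_pm {G : SnakeGraph} {Q : Set LatticeEdge} (hQ : G.IsPerfectMatching Q)
    {i : ℕ} (h : G.CanTwist Q i) : G.IsPerfectMatching (G.twist i Q) := by
  obtain ⟨hi1, hid, h2⟩ := h
  constructor
  · rintro e (he | he)
    · exact hQ.1 he.1
    · exact tile_subset_edges G hi1 hid he.1
  intro v hv
  by_cases hc : v ∈ tileCorners (G.corner i)
  · -- v is a corner of tile i
    set c := G.corner i with hc_def
    have hpat := pm_twist_pattern hQ hi1 hid h2
    have htile : ∀ e, e ∈ G.tile i ↔
        (e = southSide c ∨ e = northSide c ∨ e = westSide c ∨ e = eastSide c) :=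
      fun e => mem_tileSides
    simp only [tileCorners, Set.mem_insert_iff, Set.mem_singleton_iff] at hc
    rcases hpat with ⟨hS, hN, hW, hE⟩ | ⟨hS, hN, hW, hE⟩
    · -- Q contains south and north; new edges are west and east
      rcases hc with rfl | h' | h' | h'
      · refine twist_unique_at hQ hv hS ((htile _).2 (by tauto)) (by simp [hc_def, endpoints_south])
          ((htile _).2 (by tauto)) hW (by simp [hc_def, endpoints_west]) ?_
        intro e het heQ hve
        rcases (htile e).1 het with rfl | rfl | rfl | rfl
        · exact absurd hS heQ
        · simp only [endpoints_north, Set.mem_insert_iff, Set.mem_singleton_iff,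
            Prod.ext_iff] at hve; omega
        · rfl
        · simp only [endpoints_east, Set.mem_insert_iff, Set.mem_singleton_iff,
            Prod.ext_iff] at hve; omega
      · subst h'
        refine twist_unique_at hQ hv hS ((htile _).2 (by tauto)) (by simp [hc_def, endpoints_south])
          ((htile _).2 (by tauto)) hE (by simp [hc_def, endpoints_east]) ?_
        intro e het heQ hve
        rcases (htile e).1 het with rfl | rfl | rfl | rfl
        · exact absurd hS heQ
        · simp only [endpoints_north, Set.mem_insert_iff, Set.mem_singleton_iff,
            Prod.ext_iff] at hve; omega
        · simp only [endpoints_west, Set.mem_insert_iff, Set.mem_singleton_iff,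
            Prod.ext_iff] at hve; omega
        · rfl
      · subst h'
        refine twist_unique_at hQ hv hN ((htile _).2 (by tauto)) (by simp [hc_def, endpoints_north])
          ((htile _).2 (by tauto)) hW (by simp [hc_def, endpoints_west]) ?_
        intro e het heQ hve
        rcases (htile e).1 het with rfl | rfl | rfl | rfl
        · simp only [endpoints_south, Set.mem_insert_iff, Set.mem_singleton_iff,
            Prod.ext_iff] at hve; omega
        · exact absurd hN heQ
        · rfl
        · simp only [endpoints_east, Set.mem_insert_iff, Set.mem_singleton_iff,
            Prod.ext_iff] at hve; omega
      · subst h'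
        refine twist_unique_at hQ hv hN ((htile _).2 (by tauto)) (by simp [hc_def, endpoints_north])
          ((htile _).2 (by tauto)) hE (by simp [hc_def, endpoints_east]) ?_
        intro e het heQ hve
        rcases (htile e).1 het with rfl | rfl | rfl | rfl
        · simp only [endpoints_south, Set.mem_insert_iff, Set.mem_singleton_iff,
            Prod.ext_iff] at hve; omega
        · exact absurd hN heQ
        · simp only [endpoints_west, Set.mem_insert_iff, Set.mem_singleton_iff,
            Prod.ext_iff] at hve; omega
        · rfl
    · -- Q contains west and east; new edges are south and north
      rcases hc with rfl | h' | h' | h'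
      · refine twist_unique_at hQ hv hW ((htile _).2 (by tauto)) (by simp [hc_def, endpoints_west])
          ((htile _).2 (by tauto)) hS (by simp [hc_def, endpoints_south]) ?_
        intro e het heQ hve
        rcases (htile e).1 het with rfl | rfl | rfl | rfl
        · rfl
        · simp only [endpoints_north, Set.mem_insert_iff, Set.mem_singleton_iff,
            Prod.ext_iff] at hve; omega
        · exact absurd hW heQ
        · simp only [endpoints_east, Set.mem_insert_iff, Set.mem_singleton_iff,
            Prod.ext_iff] at hve; omega
      · subst h'
        refine twist_unique_at hQ hv hE ((htile _).2 (by tauto)) (by simp [hc_def, endpoints_east])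
          ((htile _).2 (by tauto)) hS (by simp [hc_def, endpoints_south]) ?_
        intro e het heQ hve
        rcases (htile e).1 het with rfl | rfl | rfl | rfl
        · rfl
        · simp only [endpoints_north, Set.mem_insert_iff, Set.mem_singleton_iff,
            Prod.ext_iff] at hve; omega
        · simp only [endpoints_west, Set.mem_insert_iff, Set.mem_singleton_iff,
            Prod.ext_iff] at hve; omega
        · exact absurd hE heQ
      · subst h'
        refine twist_unique_at hQ hv hW ((htile _).2 (by tauto)) (by simp [hc_def, endpoints_west])
          ((htile _).2 (by tauto)) hN (by simp [hc_def, endpoints_north]) ?_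
        intro e het heQ hve
        rcases (htile e).1 het with rfl | rfl | rfl | rfl
        · simp only [endpoints_south, Set.mem_insert_iff, Set.mem_singleton_iff,
            Prod.ext_iff] at hve; omega
        · rfl
        · exact absurd hW heQ
        · simp only [endpoints_east, Set.mem_insert_iff, Set.mem_singleton_iff,
            Prod.ext_iff] at hve; omega
      · subst h'
        refine twist_unique_at hQ hv hE ((htile _).2 (by tauto)) (by simp [hc_def, endpoints_east])
          ((htile _).2 (by tauto)) hN (by simp [hc_def, endpoints_north]) ?_
        intro e het heQ hve
        rcases (htile e).1 het with rfl | rfl | rfl | rfl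
        · simp only [endpoints_south, Set.mem_insert_iff, Set.mem_singleton_iff,
            Prod.ext_iff] at hve; omega
        · rfl
        · simp only [endpoints_west, Set.mem_insert_iff, Set.mem_singleton_iff,
            Prod.ext_iff] at hve; omega
        · exact absurd hE heQ
  · -- v is not a corner of tile i
    obtain ⟨e0, ⟨he0Q, he0v⟩, hu⟩ := hQ.2 v hv
    have he0t : e0 ∉ G.tile i := fun ht => hc (endpoints_subset_corners ht he0v)
    refine ⟨e0, ⟨Or.inl ⟨he0Q, he0t⟩, he0v⟩, ?_⟩
    rintro e' ⟨he' | he', hve'⟩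
    · exact hu e' ⟨he'.1, hve'⟩
    · exact absurd (endpoints_subset_corners he'.1 hve') hc

lemma tile_inter_succ' (G : SnakeGraph) {a : ℕ} (ha : 1 ≤ a) (hbd : a + 1 ≤ G.d) :
    G.tile a ∩ G.tile (a + 1) = {westSide (G.corner (a + 1))} ∨
      G.tile a ∩ G.tile (a + 1) = {southSide (G.corner (a + 1))} := by
  rcases tile_inter_succ G ha hbd with h | h
  · left
    rw [h]
    have hmem : eastSide (G.corner a) ∈ G.tile (a + 1) := by
      have : eastSide (G.corner a) ∈ G.tile a ∩ G.tile (a + 1) := by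
        rw [h]; rfl
      exact this.2
    rcases mem_tileSides.1 hmem with h' | h' | h' | h'
    · exact absurd h' (by simp [eastSide, southSide, Prod.ext_iff])
    · exact absurd h' (by simp [eastSide, northSide, Prod.ext_iff])
    · rw [h']
    · exfalso
      have hc : G.corner a = G.corner (a + 1) := by
        simp only [eastSide, Prod.ext_iff] at h'
        exact Prod.ext (by omega) (by omega)
      have := corner_inj G ha (by omega) (by omega) hbd hc
      omega
  · right
    rw [h]
    have hmem : northSide (G.corner a) ∈ G.tile (a + 1) := by
      have : northSide (G.corner a) ∈ G.tile a ∩ G.tile (a + 1) := by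
        rw [h]; rfl
      exact this.2
    rcases mem_tileSides.1 hmem with h' | h' | h' | h'
    · rw [h']
    · exfalso
      have hc : G.corner a = G.corner (a + 1) := by
        simp only [northSide, Prod.ext_iff] at h'
        exact Prod.ext (by omega) (by omega)
      have := corner_inj G ha (by omega) (by omega) hbd hc
      omega
    · exact absurd h' (by simp [northSide, westSide, Prod.ext_iff])
    · exact absurd h' (by simp [northSide, eastSide, Prod.ext_iff])

/-- Parity description of a twist sequence. -/
lemma twist_seq_parity (G : SnakeGraph) (P : Set LatticeEdge) (r : ℕ)
    (idx : ℕ → ℕ) (R : ℕ → Set LatticeEdge) (h0 : R 0 = P)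
    (hnext : ∀ t, t < r → R (t + 1) = G.twist (idx t) (R t)) :
    ∀ u, u ≤ r → ∀ x, (x ∈ R u ↔ (x ∈ P ↔
      Even (((Finset.range u).filter (fun s => x ∈ G.tile (idx s))).card))) := by
  intro u
  induction u with
  | zero => intro _ x; simp [h0]
  | succ u ih =>
    intro hu x
    have ihx := ih (by omega) x
    rw [hnext u (by omega)]
    rw [Finset.range_add_one, Finset.filter_insert]
    by_cases hx : x ∈ G.tile (idx u)
    · rw [if_pos hx, Finset.card_insert_of_notMem (by simp)]
      simp only [Nat.even_add_one]
      simp only [SnakeGraph.twist, Set.mem_union, Set.mem_diff, hx, not_true,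
        and_false, false_and, and_true, true_and, or_false, false_or, not_false_iff]
      tauto
    · rw [if_neg hx]
      simp only [SnakeGraph.twist, Set.mem_union, Set.mem_diff, hx, not_false_iff,
        and_true, false_and, and_false, or_false, false_or]
      tauto

set_option maxHeartbeats 1000000 in
/-- If a sequence of twists (with tile indices `idx 0, idx 1, …, idx (r-1)`,
`r ≥ 1`) takes a perfect matching `P` of a snake graph `G` back to itself,
then there are positions `t < t'` in the sequence with the same tile index
such that the tile indices strictly between them are pairwise distinct, all
different from `idx t`, and in fact all at distance greater than `1` from
`idx t`. -/
theorem twist_cycle_close_pair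
    (G : SnakeGraph) (P : Set LatticeEdge) (hP : G.IsPerfectMatching P)
    (r : ℕ) (hr : 1 ≤ r) (idx : ℕ → ℕ) (R : ℕ → Set LatticeEdge)
    (h0 : R 0 = P) (hrP : R r = P)
    (hstep : ∀ t, t < r → G.CanTwist (R t) (idx t) ∧ R (t + 1) = G.twist (idx t) (R t)) :
    ∃ t t', t < t' ∧ t' < r ∧ idx t' = idx t ∧
      (∀ s s', t < s → s < s' → s' < t' → idx s ≠ idx s') ∧
      (∀ s, t < s → s < t' → idx s ≠ idx t) ∧
      (∀ s, t < s → s < t' → 1 < ((idx s : ℤ) - (idx t : ℤ)).natAbs) := by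
  classical
  have hcan : ∀ t, t < r → G.CanTwist (R t) (idx t) := fun t ht => (hstep t ht).1
  have hnext : ∀ t, t < r → R (t + 1) = G.twist (idx t) (R t) := fun t ht => (hstep t ht).2
  have hpm : ∀ u, u ≤ r → G.IsPerfectMatching (R u) := by
    intro u
    induction u with
    | zero => intro _; rw [h0]; exact hP
    | succ u ih =>
      intro hu
      rw [hnext u (by omega)]
      exact twist_pm (ih (by omega)) (hcan u (by omega))
  have key := twist_seq_parity G P r idx R h0 hnext
  -- Step 1: some tile index repeats
  have hrep : ∃ a b, a < b ∧ b < r ∧ idx b = idx a := by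
    by_contra hno
    push_neg at hno
    obtain ⟨s0, hs0r, hmax⟩ := Finset.exists_max_image (Finset.range r) idx
      ⟨0, by simp [hr]; omega⟩
    simp only [Finset.mem_range] at hs0r
    set m := idx s0 with hm
    set x : LatticeEdge := northSide (G.corner m) with hx
    obtain ⟨hm1, hmd, -⟩ := hcan s0 hs0r
    have hxt : x ∈ G.tile m := mem_tileSides.2 (Or.inr (Or.inl rfl))
    have honly : ∀ s, s < r → x ∈ G.tile (idx s) → s = s0 := by
      intro s hs hxs
      by_contra hne
      obtain ⟨hs1, hsd, -⟩ := hcan s hs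
      have hle : idx s ≤ m := hmax s (Finset.mem_range.2 hs)
      rcases eq_or_lt_of_le hle with heq | hlt
      · rcases Nat.lt_or_ge s s0 with h' | h'
        · exact hno s s0 h' hs0r heq.symm
        · exact hno s0 s (by omega) hs heq
      · rcases Nat.lt_or_ge (idx s + 1) m with h' | h'
        · exact tile_disjoint G hs1 h' hmd hxs hxt
        · have hsucc : idx s + 1 = m := by omega
          have hmem : x ∈ G.tile (idx s) ∩ G.tile (idx s + 1) :=
            ⟨hxs, by rw [hsucc]; exact hxt⟩
          rcases tile_inter_succ G hs1 (by omega) with h | h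
          · rw [h] at hmem
            simp only [Set.mem_singleton_iff, hx, northSide, eastSide, Prod.ext_iff] at hmem
            exact Bool.noConfusion hmem.2
          · rw [h] at hmem
            simp only [Set.mem_singleton_iff, hx, northSide, Prod.ext_iff] at hmem
            have hc : G.corner m = G.corner (idx s) :=
              Prod.ext (by omega) (by omega)
            have := corner_inj G hm1 hmd hs1 hsd hc
            omega
    have hfilter : (Finset.range r).filter (fun s => x ∈ G.tile (idx s)) = {s0} := by
      ext s
      simp only [Finset.mem_filter, Finset.mem_range, Finset.mem_singleton]
      constructor
      · rintro ⟨h1, h2⟩; exact honly s h1 h2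
      · rintro rfl; exact ⟨hs0r, hxt⟩
    have hcontra := key r le_rfl x
    rw [hrP, hfilter] at hcontra
    simp at hcontra
  -- Step 2: minimal-gap repeated pair
  have hSne : {n | ∃ a b, a < b ∧ b < r ∧ idx b = idx a ∧ b - a = n}.Nonempty := by
    obtain ⟨a, b, h1, h2, h3⟩ := hrep
    exact ⟨b - a, a, b, h1, h2, h3, rfl⟩
  obtain ⟨t, t', htt', ht'r, hii, hgap⟩ := Nat.sInf_mem hSne
  have hmin : ∀ a b, a < b → b < r → idx b = idx a →
      t' - t ≤ b - a := by
    intro a b h1 h2 h3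
    rw [hgap]
    exact Nat.sInf_le ⟨a, b, h1, h2, h3, rfl⟩
  have hdist : ∀ s s', t < s → s < s' → s' < t' → idx s ≠ idx s' := by
    intro s s' h1 h2 h3 h4
    have := hmin s s' h2 (by omega) h4.symm
    omega
  have hnei : ∀ s, t < s → s < t' → idx s ≠ idx t := by
    intro s h1 h2 h3
    have := hmin t s h1 (by omega) h3
    omega
  refine ⟨t, t', htt', ht'r, hii, hdist, hnei, ?_⟩
  intro s0 hts0 hs0t'
  by_contra hnat
  push_neg at hnat
  -- setup at the minimal pair
  obtain ⟨hi1, hid, hcard_t⟩ := hcan t (by omega)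
  have hcan' := hcan t' ht'r
  rw [hii] at hcan'
  obtain ⟨-, -, hcard_t'⟩ := hcan'
  set i := idx t with hi_def
  set c := G.corner i with hc_def
  have hO := pm_twist_pattern (hpm t (by omega)) hi1 hid hcard_t
  have hO' := pm_twist_pattern (hpm t' (by omega)) hi1 hid hcard_t'
  rw [← hc_def] at hO hO'
  have mS : southSide c ∈ G.tile i := mem_tileSides.2 (Or.inl rfl)
  have mN : northSide c ∈ G.tile i := mem_tileSides.2 (Or.inr (Or.inl rfl))
  have mW : westSide c ∈ G.tile i := mem_tileSides.2 (Or.inr (Or.inr (Or.inl rfl)))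
  have mE : eastSide c ∈ G.tile i := mem_tileSides.2 (Or.inr (Or.inr (Or.inr rfl)))
  -- parity over [t, t')
  have hpar : ∀ x : LatticeEdge, x ∈ R t' ↔ (x ∈ R t ↔
      Even (((Finset.Ico t t').filter (fun s => x ∈ G.tile (idx s))).card)) := by
    intro x
    have h1 := key t (by omega) x
    have h2 := key t' (by omega) x
    have hsplit : ((Finset.range t').filter (fun s => x ∈ G.tile (idx s))).card =
        ((Finset.range t).filter (fun s => x ∈ G.tile (idx s))).card +
        ((Finset.Ico t t').filter (fun s => x ∈ G.tile (idx s))).card := by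
      rw [Finset.range_eq_Ico,
        ← Finset.Ico_union_Ico_eq_Ico (Nat.zero_le t) (le_of_lt htt'),
        Finset.filter_union,
        Finset.card_union_of_disjoint
          (Finset.disjoint_filter_filter (Finset.Ico_disjoint_Ico_consecutive 0 t t')),
          ← Finset.range_eq_Ico]
    rw [hsplit, Nat.even_add] at h2
    tauto
  have hOdd : ∀ x, x ∈ G.tile i → (∀ s, t < s → s < t' → x ∉ G.tile (idx s)) →
      (x ∈ R t' ↔ ¬(x ∈ R t)) := by
    intro x hx hno
    have hfil : (Finset.Ico t t').filter (fun s => x ∈ G.tile (idx s)) = {t} := by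
      ext s
      simp only [Finset.mem_filter, Finset.mem_Ico, Finset.mem_singleton]
      constructor
      · rintro ⟨⟨ha, hb⟩, hcc⟩
        rcases eq_or_lt_of_le ha with h | h
        · exact h.symm
        · exact absurd hcc (hno s h hb)
      · rintro rfl
        exact ⟨⟨le_rfl, htt'⟩, hx⟩
    have hthis := hpar x
    rw [hfil] at hthis
    simpa [Nat.even_iff] using hthis
  have hEven2 : ∀ x, x ∈ G.tile i → ∀ u0, t < u0 → u0 < t' → x ∈ G.tile (idx u0) →
      (∀ s, t < s → s < t' → x ∈ G.tile (idx s) → s = u0) →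
      (x ∈ R t' ↔ x ∈ R t) := by
    intro x hx u0 h1 h2 hxu hu
    have hfil : (Finset.Ico t t').filter (fun s => x ∈ G.tile (idx s)) = {t, u0} := by
      ext s
      simp only [Finset.mem_filter, Finset.mem_Ico, Finset.mem_insert, Finset.mem_singleton]
      constructor
      · rintro ⟨⟨ha, hb⟩, hcc⟩
        rcases eq_or_lt_of_le ha with h | h
        · exact Or.inl h.symm
        · exact Or.inr (hu s h hb hcc)
      · rintro (rfl | rfl)
        · exact ⟨⟨le_rfl, htt'⟩, hx⟩
        · exact ⟨⟨by omega, h2⟩, hxu⟩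
    have hthis := hpar x
    rw [hfil, Finset.card_insert_of_notMem (by simp; omega),
      Finset.card_singleton] at hthis
    simpa [Nat.even_iff] using hthis
  have hmemb : ∀ s, t < s → s < t' → ∀ x, x ∈ G.tile i → x ∈ G.tile (idx s) →
      (idx s = i + 1 ∧ x ∈ G.tile i ∩ G.tile (i + 1)) ∨
      (idx s + 1 = i ∧ x ∈ G.tile (idx s) ∩ G.tile (idx s + 1)) := by
    intro s h1 h2 x hx hxs
    obtain ⟨hs1, hsd, -⟩ := hcan s (by omega)
    have hne : idx s ≠ i := hnei s h1 h2
    rcases Nat.lt_or_ge (idx s) i with hlt | hge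
    · rcases Nat.lt_or_ge (idx s + 1) i with hlt2 | hge2
      · exact (tile_disjoint G hs1 hlt2 hid hxs hx).elim
      · refine Or.inr ⟨by omega, ⟨hxs, ?_⟩⟩
        rw [show idx s + 1 = i by omega]
        exact hx
    · rcases Nat.lt_or_ge (i + 1) (idx s) with hlt2 | hge2
      · exact (tile_disjoint G hi1 hlt2 hsd hx hxs).elim
      · have heq : idx s = i + 1 := by omega
        refine Or.inl ⟨heq, ⟨hx, ?_⟩⟩
        rw [← heq]
        exact hxs
  have huniqpos : ∀ s s', t < s → s < t' → t < s' → s' < t' → idx s = idx s' → s = s' := by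
    intro s s' h1 h2 h3 h4 h5
    rcases lt_trichotomy s s' with h | h | h
    · exact absurd h5 (hdist s s' h1 h h4)
    · exact h
    · exact absurd h5.symm (hdist s' s h3 h h2)
  have hs0cases : idx s0 = i + 1 ∨ idx s0 + 1 = i := by
    have h1 : idx s0 ≠ i := hnei s0 hts0 hs0t'
    obtain ⟨hs01, -, -⟩ := hcan s0 (by omega)
    omega
  by_cases hpe : ∃ sp, t < sp ∧ sp < t' ∧ idx sp = i + 1
  · obtain ⟨sp, hsp1, hsp2, hsp3⟩ := hpe
    obtain ⟨-, hspd, -⟩ := hcan sp (by omega)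
    rw [hsp3] at hspd
    have hEsp : ∀ x, x ∈ G.tile i ∩ G.tile (i + 1) → x ∈ G.tile (idx sp) := by
      intro x hxx
      rw [hsp3]
      exact hxx.2
    by_cases hme : ∃ sm, t < sm ∧ sm < t' ∧ idx sm + 1 = i
    · -- both neighbors occur between t and t'
      obtain ⟨sm, hsm1, hsm2, hsm3⟩ := hme
      obtain ⟨hsm01, -, -⟩ := hcan sm (by omega)
      have hIm0 := tile_inter_succ' G hsm01 (by omega)
      rw [hsm3, ← hc_def] at hIm0
      have hWsm : ∀ x, x ∈ G.tile (idx sm) ∩ G.tile i → x ∈ G.tile (idx sm) :=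
        fun x hxx => hxx.1
      have hmeq : ∀ s, t < s → s < t' → idx s + 1 = i → idx s = idx sm := by
        intro s a b h
        omega
      rcases tile_inter_succ G hi1 hspd with hIp | hIp <;>
        rcases hIm0 with hIm | hIm
      · -- shared edges: east (with i+1), west (with i-1)
        have hno : ∀ x, x ∈ G.tile i → x ≠ eastSide c → x ≠ westSide c →
            ∀ s, t < s → s < t' → x ∉ G.tile (idx s) := by
          intro x hx hxe hxw s h1 h2 hxs
          rcases hmemb s h1 h2 x hx hxs with ⟨h3, h4⟩ | ⟨h3, h4⟩
          · rw [hIp] at h4; exact hxe h4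
          · rw [h3, hmeq s h1 h2 h3] at h4
            rw [hIm] at h4; exact hxw h4
        have huE : ∀ s, t < s → s < t' → eastSide c ∈ G.tile (idx s) → s = sp := by
          intro s h1 h2 hxs
          rcases hmemb s h1 h2 _ mE hxs with ⟨h3, h4⟩ | ⟨h3, h4⟩
          · exact huniqpos s sp h1 h2 hsp1 hsp2 (by omega)
          · rw [h3, hmeq s h1 h2 h3, hIm] at h4
            exact absurd h4.symm (side_ne_WE c)
        have huW : ∀ s, t < s → s < t' → westSide c ∈ G.tile (idx s) → s = sm := by
          intro s h1 h2 hxs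
          rcases hmemb s h1 h2 _ mW hxs with ⟨h3, h4⟩ | ⟨h3, h4⟩
          · rw [hIp] at h4
            exact absurd h4 (side_ne_WE c)
          · exact huniqpos s sm h1 h2 hsm1 hsm2 (by omega)
        have hS := hOdd _ mS (hno _ mS (side_ne_SE c) (side_ne_SW c))
        have hN := hOdd _ mN (hno _ mN (side_ne_NE c) (side_ne_NW c))
        have hE := hEven2 _ mE sp hsp1 hsp2 (hEsp _ (by rw [hIp]; rfl)) huE
        have hW := hEven2 _ mW sm hsm1 hsm2
          (hWsm _ (by rw [hIm]; rfl)) huW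
        clear * - hS hN hW hE hO hO'
        rcases hO with ⟨a1, a2, a3, a4⟩ | ⟨a1, a2, a3, a4⟩ <;>
          rcases hO' with ⟨b1, b2, b3, b4⟩ | ⟨b1, b2, b3, b4⟩ <;> tauto
      · -- shared: east, south
        have hno : ∀ x, x ∈ G.tile i → x ≠ eastSide c → x ≠ southSide c →
            ∀ s, t < s → s < t' → x ∉ G.tile (idx s) := by
          intro x hx hxe hxw s h1 h2 hxs
          rcases hmemb s h1 h2 x hx hxs with ⟨h3, h4⟩ | ⟨h3, h4⟩
          · rw [hIp] at h4; exact hxe h4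
          · rw [h3, hmeq s h1 h2 h3] at h4
            rw [hIm] at h4; exact hxw h4
        have huE : ∀ s, t < s → s < t' → eastSide c ∈ G.tile (idx s) → s = sp := by
          intro s h1 h2 hxs
          rcases hmemb s h1 h2 _ mE hxs with ⟨h3, h4⟩ | ⟨h3, h4⟩
          · exact huniqpos s sp h1 h2 hsp1 hsp2 (by omega)
          · rw [h3, hmeq s h1 h2 h3, hIm] at h4
            exact absurd h4.symm (side_ne_SE c)
        have huS : ∀ s, t < s → s < t' → southSide c ∈ G.tile (idx s) → s = sm := by
          intro s h1 h2 hxs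
          rcases hmemb s h1 h2 _ mS hxs with ⟨h3, h4⟩ | ⟨h3, h4⟩
          · rw [hIp] at h4
            exact absurd h4 (side_ne_SE c)
          · exact huniqpos s sm h1 h2 hsm1 hsm2 (by omega)
        have hW := hOdd _ mW (hno _ mW ((side_ne_WE c)) (fun h => (side_ne_SW c) h.symm))
        have hN := hOdd _ mN (hno _ mN (side_ne_NE c) (fun h => (side_ne_SN c) h.symm))
        have hE := hEven2 _ mE sp hsp1 hsp2 (hEsp _ (by rw [hIp]; rfl)) huE
        have hS := hEven2 _ mS sm hsm1 hsm2 (hWsm _ (by rw [hIm]; rfl)) huS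
        clear * - hS hN hW hE hO hO'
        rcases hO with ⟨a1, a2, a3, a4⟩ | ⟨a1, a2, a3, a4⟩ <;>
          rcases hO' with ⟨b1, b2, b3, b4⟩ | ⟨b1, b2, b3, b4⟩ <;> tauto
      · -- shared: north, west
        have hno : ∀ x, x ∈ G.tile i → x ≠ northSide c → x ≠ westSide c →
            ∀ s, t < s → s < t' → x ∉ G.tile (idx s) := by
          intro x hx hxe hxw s h1 h2 hxs
          rcases hmemb s h1 h2 x hx hxs with ⟨h3, h4⟩ | ⟨h3, h4⟩
          · rw [hIp] at h4; exact hxe h4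
          · rw [h3, hmeq s h1 h2 h3] at h4
            rw [hIm] at h4; exact hxw h4
        have huN : ∀ s, t < s → s < t' → northSide c ∈ G.tile (idx s) → s = sp := by
          intro s h1 h2 hxs
          rcases hmemb s h1 h2 _ mN hxs with ⟨h3, h4⟩ | ⟨h3, h4⟩
          · exact huniqpos s sp h1 h2 hsp1 hsp2 (by omega)
          · rw [h3, hmeq s h1 h2 h3, hIm] at h4
            exact absurd h4 (side_ne_NW c)
        have huW : ∀ s, t < s → s < t' → westSide c ∈ G.tile (idx s) → s = sm := by
          intro s h1 h2 hxs
          rcases hmemb s h1 h2 _ mW hxs with ⟨h3, h4⟩ | ⟨h3, h4⟩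
          · rw [hIp] at h4
            exact absurd h4.symm (side_ne_NW c)
          · exact huniqpos s sm h1 h2 hsm1 hsm2 (by omega)
        have hS := hOdd _ mS (hno _ mS (side_ne_SN c) (side_ne_SW c))
        have hE := hOdd _ mE (hno _ mE (fun h => (side_ne_NE c) h.symm)
          (fun h => (side_ne_WE c) h.symm))
        have hN := hEven2 _ mN sp hsp1 hsp2 (hEsp _ (by rw [hIp]; rfl)) huN
        have hW := hEven2 _ mW sm hsm1 hsm2 (hWsm _ (by rw [hIm]; rfl)) huW
        clear * - hS hN hW hE hO hO'
        rcases hO with ⟨a1, a2, a3, a4⟩ | ⟨a1, a2, a3, a4⟩ <;>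
          rcases hO' with ⟨b1, b2, b3, b4⟩ | ⟨b1, b2, b3, b4⟩ <;> tauto
      · -- shared: north, south
        have hno : ∀ x, x ∈ G.tile i → x ≠ northSide c → x ≠ southSide c →
            ∀ s, t < s → s < t' → x ∉ G.tile (idx s) := by
          intro x hx hxe hxw s h1 h2 hxs
          rcases hmemb s h1 h2 x hx hxs with ⟨h3, h4⟩ | ⟨h3, h4⟩
          · rw [hIp] at h4; exact hxe h4
          · rw [h3, hmeq s h1 h2 h3] at h4
            rw [hIm] at h4; exact hxw h4
        have huN : ∀ s, t < s → s < t' → northSide c ∈ G.tile (idx s) → s = sp := by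
          intro s h1 h2 hxs
          rcases hmemb s h1 h2 _ mN hxs with ⟨h3, h4⟩ | ⟨h3, h4⟩
          · exact huniqpos s sp h1 h2 hsp1 hsp2 (by omega)
          · rw [h3, hmeq s h1 h2 h3, hIm] at h4
            exact absurd h4.symm (side_ne_SN c)
        have huS : ∀ s, t < s → s < t' → southSide c ∈ G.tile (idx s) → s = sm := by
          intro s h1 h2 hxs
          rcases hmemb s h1 h2 _ mS hxs with ⟨h3, h4⟩ | ⟨h3, h4⟩
          · rw [hIp, ← hc_def] at h4
            simp only [Set.mem_singleton_iff] at h4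
            exact absurd h4 (side_ne_SN c)
          · exact huniqpos s sm h1 h2 hsm1 hsm2 (by omega)
        have hW := hOdd _ mW (hno _ mW (fun h => (side_ne_NW c) h.symm)
          (fun h => (side_ne_SW c) h.symm))
        have hE := hOdd _ mE (hno _ mE (fun h => (side_ne_NE c) h.symm)
          (fun h => (side_ne_SE c) h.symm))
        have hN := hEven2 _ mN sp hsp1 hsp2 (hEsp _ (by rw [hIp]; rfl)) huN
        have hS := hEven2 _ mS sm hsm1 hsm2 (hWsm _ (by rw [hIm]; rfl)) huS
        clear * - hS hN hW hE hO hO'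
        rcases hO with ⟨a1, a2, a3, a4⟩ | ⟨a1, a2, a3, a4⟩ <;>
          rcases hO' with ⟨b1, b2, b3, b4⟩ | ⟨b1, b2, b3, b4⟩ <;> tauto
    · -- only the upper neighbor occurs
      push_neg at hme
      rcases tile_inter_succ G hi1 hspd with hIp | hIp
      · have hno : ∀ x, x ∈ G.tile i → x ≠ eastSide c →
            ∀ s, t < s → s < t' → x ∉ G.tile (idx s) := by
          intro x hx hxe s h1 h2 hxs
          rcases hmemb s h1 h2 x hx hxs with ⟨h3, h4⟩ | ⟨h3, h4⟩
          · rw [hIp] at h4; exact hxe h4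
          · exact hme s h1 h2 h3
        have huE : ∀ s, t < s → s < t' → eastSide c ∈ G.tile (idx s) → s = sp := by
          intro s h1 h2 hxs
          rcases hmemb s h1 h2 _ mE hxs with ⟨h3, h4⟩ | ⟨h3, h4⟩
          · exact huniqpos s sp h1 h2 hsp1 hsp2 (by omega)
          · exact (hme s h1 h2 h3).elim
        have hS := hOdd _ mS (hno _ mS (side_ne_SE c))
        have hN := hOdd _ mN (hno _ mN (side_ne_NE c))
        have hW := hOdd _ mW (hno _ mW (side_ne_WE c))
        have hE := hEven2 _ mE sp hsp1 hsp2 (hEsp _ (by rw [hIp]; rfl)) huE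
        clear * - hS hN hW hE hO hO'
        rcases hO with ⟨a1, a2, a3, a4⟩ | ⟨a1, a2, a3, a4⟩ <;>
          rcases hO' with ⟨b1, b2, b3, b4⟩ | ⟨b1, b2, b3, b4⟩ <;> tauto
      · have hno : ∀ x, x ∈ G.tile i → x ≠ northSide c →
            ∀ s, t < s → s < t' → x ∉ G.tile (idx s) := by
          intro x hx hxe s h1 h2 hxs
          rcases hmemb s h1 h2 x hx hxs with ⟨h3, h4⟩ | ⟨h3, h4⟩
          · rw [hIp] at h4; exact hxe h4
          · exact hme s h1 h2 h3
        have huN : ∀ s, t < s → s < t' → northSide c ∈ G.tile (idx s) → s = sp := by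
          intro s h1 h2 hxs
          rcases hmemb s h1 h2 _ mN hxs with ⟨h3, h4⟩ | ⟨h3, h4⟩
          · exact huniqpos s sp h1 h2 hsp1 hsp2 (by omega)
          · exact (hme s h1 h2 h3).elim
        have hS := hOdd _ mS (hno _ mS (side_ne_SN c))
        have hW := hOdd _ mW (hno _ mW (fun h => (side_ne_NW c) h.symm))
        have hE := hOdd _ mE (hno _ mE (fun h => (side_ne_NE c) h.symm))
        have hN := hEven2 _ mN sp hsp1 hsp2 (hEsp _ (by rw [hIp]; rfl)) huN
        clear * - hS hN hW hE hO hO'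
        rcases hO with ⟨a1, a2, a3, a4⟩ | ⟨a1, a2, a3, a4⟩ <;>
          rcases hO' with ⟨b1, b2, b3, b4⟩ | ⟨b1, b2, b3, b4⟩ <;> tauto
  · by_cases hme : ∃ sm, t < sm ∧ sm < t' ∧ idx sm + 1 = i
    · -- only the lower neighbor occurs
      push_neg at hpe
      obtain ⟨sm, hsm1, hsm2, hsm3⟩ := hme
      obtain ⟨hsm01, -, -⟩ := hcan sm (by omega)
      have hIm0 := tile_inter_succ' G hsm01 (by omega)
      rw [hsm3, ← hc_def] at hIm0
      have hWsm : ∀ x, x ∈ G.tile (idx sm) ∩ G.tile i → x ∈ G.tile (idx sm) :=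
        fun x hxx => hxx.1
      have hmeq : ∀ s, t < s → s < t' → idx s + 1 = i → idx s = idx sm := by
        intro s a b h
        omega
      rcases hIm0 with hIm | hIm
      · have hno : ∀ x, x ∈ G.tile i → x ≠ westSide c →
            ∀ s, t < s → s < t' → x ∉ G.tile (idx s) := by
          intro x hx hxw s h1 h2 hxs
          rcases hmemb s h1 h2 x hx hxs with ⟨h3, h4⟩ | ⟨h3, h4⟩
          · exact hpe s h1 h2 h3
          · rw [h3, hmeq s h1 h2 h3, hIm] at h4
            exact hxw h4
        have huW : ∀ s, t < s → s < t' → westSide c ∈ G.tile (idx s) → s = sm := by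
          intro s h1 h2 hxs
          rcases hmemb s h1 h2 _ mW hxs with ⟨h3, h4⟩ | ⟨h3, h4⟩
          · exact (hpe s h1 h2 h3).elim
          · exact huniqpos s sm h1 h2 hsm1 hsm2 (by omega)
        have hS := hOdd _ mS (hno _ mS (side_ne_SW c))
        have hN := hOdd _ mN (hno _ mN (side_ne_NW c))
        have hE := hOdd _ mE (hno _ mE (fun h => (side_ne_WE c) h.symm))
        have hW := hEven2 _ mW sm hsm1 hsm2 (hWsm _ (by rw [hIm]; rfl)) huW
        clear * - hS hN hW hE hO hO'
        rcases hO with ⟨a1, a2, a3, a4⟩ | ⟨a1, a2, a3, a4⟩ <;>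
          rcases hO' with ⟨b1, b2, b3, b4⟩ | ⟨b1, b2, b3, b4⟩ <;> tauto
      · have hno : ∀ x, x ∈ G.tile i → x ≠ southSide c →
            ∀ s, t < s → s < t' → x ∉ G.tile (idx s) := by
          intro x hx hxw s h1 h2 hxs
          rcases hmemb s h1 h2 x hx hxs with ⟨h3, h4⟩ | ⟨h3, h4⟩
          · exact hpe s h1 h2 h3
          · rw [h3, hmeq s h1 h2 h3, hIm] at h4
            exact hxw h4
        have huS : ∀ s, t < s → s < t' → southSide c ∈ G.tile (idx s) → s = sm := by
          intro s h1 h2 hxs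
          rcases hmemb s h1 h2 _ mS hxs with ⟨h3, h4⟩ | ⟨h3, h4⟩
          · exact (hpe s h1 h2 h3).elim
          · exact huniqpos s sm h1 h2 hsm1 hsm2 (by omega)
        have hN := hOdd _ mN (hno _ mN (fun h => (side_ne_SN c) h.symm))
        have hW := hOdd _ mW (hno _ mW (fun h => (side_ne_SW c) h.symm))
        have hE := hOdd _ mE (hno _ mE (fun h => (side_ne_SE c) h.symm))
        have hS := hEven2 _ mS sm hsm1 hsm2 (hWsm _ (by rw [hIm]; rfl)) huS
        clear * - hS hN hW hE hO hO'
        rcases hO with ⟨a1, a2, a3, a4⟩ | ⟨a1, a2, a3, a4⟩ <;>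
          rcases hO' with ⟨b1, b2, b3, b4⟩ | ⟨b1, b2, b3, b4⟩ <;> tauto
    · -- neither neighbor occurs: contradiction with s0
      rcases hs0cases with h | h
      · exact hpe ⟨s0, hts0, hs0t', h⟩
      · exact hme ⟨s0, hts0, hs0t', h⟩
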